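/- Let K be a field, V and W vector spaces over K, and f : V → V, g : W → W K-linear endomorphisms such that V is spanned by eigenvectors of f and W is spanned by eigenvectors of g (i.e. the supremum of all eigenspaces of f is V, and similarly for g). Let a₀ be an eigenvalue of f, b₀ an eigenvalue of g, and set μ = a₀ + b₀. Assume that for all eigenvalues a of f and b of g, a + b = μ implies a = a₀ and b = b₀. Then every z ∈ V ⊗_K W satisfying (f ⊗ id + id ⊗ g)(z) = μ·z also satisfies (f ⊗ id)(z) = a₀·z and (id ⊗ g)(z) = b₀·z. -/

import Mathlib

open Module TensorProduct

private lemma aux_act {K : Type*} [Field K] {V W : Type*}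
    [AddCommGroup V] [Module K V] [AddCommGroup W] [Module K W]
    (f : Module.End K V) (g : Module.End K W) (a b : K) :
    ∀ x ∈ LinearMap.range (TensorProduct.map (f.eigenspace a).subtype (g.eigenspace b).subtype),
      TensorProduct.map f (LinearMap.id : W →ₗ[K] W) x = a • x ∧
      TensorProduct.map (LinearMap.id : V →ₗ[K] V) g x = b • x := by
  rintro x ⟨u, rfl⟩
  induction u with
  | zero => simp
  | tmul v w =>
      obtain ⟨v, hv⟩ := v; obtain ⟨w, hw⟩ := w
      rw [Module.End.mem_eigenspace_iff] at hv hw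
      simp only [TensorProduct.map_tmul, Submodule.coe_subtype, LinearMap.id_coe, id_eq]
      constructor
      · rw [hv, TensorProduct.smul_tmul']
      · rw [hw, TensorProduct.tmul_smul]
  | add x y hx hy =>
      simp only [map_add, hx.1, hx.2, hy.1, hy.2, smul_add, and_self]

private lemma aux_bot {K : Type*} [Field K] {V W : Type*}
    [AddCommGroup V] [Module K V] [AddCommGroup W] [Module K W]
    (P : Submodule K V) (Q : Submodule K W) (h : P = ⊥ ∨ Q = ⊥) :
    LinearMap.range (TensorProduct.map P.subtype Q.subtype) = ⊥ := by
  rw [eq_bot_iff]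
  rintro x ⟨u, rfl⟩
  induction u with
  | zero => simp
  | tmul v w =>
      obtain ⟨v, hv⟩ := v; obtain ⟨w, hw⟩ := w
      rcases h with h | h
      · subst h; rw [Submodule.mem_bot] at hv; subst hv; simp
      · subst h; rw [Submodule.mem_bot] at hw; subst hw; simp
  | add x y hx hy =>
      rw [map_add]; exact add_mem hx hy

private lemma aux_top {K : Type*} [Field K] {V W : Type*}
    [AddCommGroup V] [Module K V] [AddCommGroup W] [Module K W]
    (f : Module.End K V) (g : Module.End K W)
    (hV : (⨆ a : K, f.eigenspace a) = ⊤)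
    (hW : (⨆ b : K, g.eigenspace b) = ⊤) :
    (⨆ p : K × K, LinearMap.range (TensorProduct.map (f.eigenspace p.1).subtype
      (g.eigenspace p.2).subtype)) = ⊤ := by
  set S : K × K → Submodule K (V ⊗[K] W) := fun p =>
    LinearMap.range (TensorProduct.map (f.eigenspace p.1).subtype (g.eigenspace p.2).subtype)
  rw [eq_top_iff]
  intro z _
  induction z with
  | zero => exact zero_mem _
  | add x y hx hy => exact add_mem (hx Submodule.mem_top) (hy Submodule.mem_top)
  | tmul v w =>
      have hv : v ∈ ⨆ a : K, f.eigenspace a := hV ▸ Submodule.mem_top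
      refine Submodule.iSup_induction (motive := fun v => v ⊗ₜ[K] w ∈ ⨆ p, S p) _ hv ?_ (by simp) ?_
      · intro a v hva
        have hw : w ∈ ⨆ b : K, g.eigenspace b := hW ▸ Submodule.mem_top
        refine Submodule.iSup_induction (motive := fun w => v ⊗ₜ[K] w ∈ ⨆ p, S p) _ hw ?_ (by simp) ?_
        · intro b w hwb
          refine Submodule.mem_iSup_of_mem (a, b) ?_
          exact ⟨(⟨v, hva⟩ : f.eigenspace a) ⊗ₜ ⟨w, hwb⟩, rfl⟩
        · intro w₁ w₂ h1 h2
          rw [TensorProduct.tmul_add]; exact add_mem h1 h2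
      · intro v₁ v₂ h1 h2
        rw [TensorProduct.add_tmul]; exact add_mem h1 h2

/-- If `V` and `W` are spanned by eigenvectors of `f` and `g` respectively, and
`μ = a₀ + b₀` admits the unique decomposition `a₀ + b₀` as a sum of an eigenvalue of `f`
and an eigenvalue of `g`, then every `μ`-eigenvector of `f ⊗ id + id ⊗ g` is an
`a₀`-eigenvector of `f ⊗ id` and a `b₀`-eigenvector of `id ⊗ g`. -/
theorem tensor_eigenvector_of_unique_sum
    {K : Type*} [Field K] {V W : Type*}
    [AddCommGroup V] [Module K V] [AddCommGroup W] [Module K W]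
    (f : Module.End K V) (g : Module.End K W)
    (hV : (⨆ a : K, f.eigenspace a) = ⊤)
    (hW : (⨆ b : K, g.eigenspace b) = ⊤)
    (a₀ b₀ : K) (ha₀ : f.HasEigenvalue a₀) (hb₀ : g.HasEigenvalue b₀)
    (huniq : ∀ a b : K, f.HasEigenvalue a → g.HasEigenvalue b →
      a + b = a₀ + b₀ → a = a₀ ∧ b = b₀) :
    ∀ z : V ⊗[K] W,
      (TensorProduct.map f (LinearMap.id : W →ₗ[K] W) +
        TensorProduct.map (LinearMap.id : V →ₗ[K] V) g) z = (a₀ + b₀) • z →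
      TensorProduct.map f (LinearMap.id : W →ₗ[K] W) z = a₀ • z ∧
        TensorProduct.map (LinearMap.id : V →ₗ[K] V) g z = b₀ • z := by
  intro z hz
  set μ := a₀ + b₀ with hμ
  set T : Module.End K (V ⊗[K] W) :=
    TensorProduct.map f (LinearMap.id : W →ₗ[K] W) +
      TensorProduct.map (LinearMap.id : V →ₗ[K] V) g with hT
  set S : K × K → Submodule K (V ⊗[K] W) := fun p =>
    LinearMap.range (TensorProduct.map (f.eigenspace p.1).subtype (g.eigenspace p.2).subtype)
    with hS
  -- each S p is inside the (p.1 + p.2)-eigenspace of T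
  have hSeig : ∀ p : K × K, S p ≤ T.eigenspace (p.1 + p.2) := by
    intro p x hx
    obtain ⟨h1, h2⟩ := aux_act f g p.1 p.2 x hx
    rw [Module.End.mem_eigenspace_iff, hT, LinearMap.add_apply, h1, h2, add_smul]
  -- S p ≤ S (a₀, b₀) for pairs summing to μ
  have hkey : ∀ p : K × K, p.1 + p.2 = μ → S p ≤ S (a₀, b₀) := by
    intro p hp
    by_cases hfa : f.HasEigenvalue p.1
    · by_cases hgb : g.HasEigenvalue p.2
      · obtain ⟨h1, h2⟩ := huniq p.1 p.2 hfa hgb hp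
        have : p = (a₀, b₀) := Prod.ext h1 h2
        rw [this]
      · have : g.eigenspace p.2 = ⊥ := by
          rwa [Module.End.hasEigenvalue_iff, not_not] at hgb
        rw [hS]
        simp only
        rw [aux_bot _ _ (Or.inr this)]
        exact bot_le
    · have : f.eigenspace p.1 = ⊥ := by
        rwa [Module.End.hasEigenvalue_iff, not_not] at hfa
      rw [hS]
      simp only
      rw [aux_bot _ _ (Or.inl this)]
      exact bot_le
  -- decompose z
  have htop : z ∈ ⨆ p : K × K, S p := by
    rw [aux_top f g hV hW]; exact Submodule.mem_top
  rw [iSup_split S (fun p => p.1 + p.2 = μ)] at htop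
  obtain ⟨x, hx, y, hy, hxy⟩ := Submodule.mem_sup.mp htop
  have hxS : x ∈ S (a₀, b₀) := by
    have hle : (⨆ (p : K × K) (_ : p.1 + p.2 = μ), S p) ≤ S (a₀, b₀) := iSup₂_le hkey
    exact hle hx
  have hxeig : x ∈ T.eigenspace μ := hSeig (a₀, b₀) hxS
  have hzeig : z ∈ T.eigenspace μ := by
    rw [Module.End.mem_eigenspace_iff]; exact hz
  have hyB : y ∈ ⨆ (c : K) (_ : c ≠ μ), T.eigenspace c := by
    have hle : (⨆ (p : K × K) (_ : ¬ p.1 + p.2 = μ), S p) ≤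
        ⨆ (c : K) (_ : c ≠ μ), T.eigenspace c := by
      refine iSup₂_le fun p hp => ?_
      exact le_trans (hSeig p) (le_iSup₂ (f := fun c _ => T.eigenspace c) (p.1 + p.2) hp)
    exact hle hy
  have hyeig : y ∈ T.eigenspace μ := by
    have : y = z - x := by rw [← hxy]; abel
    rw [this]; exact sub_mem hzeig hxeig
  have hdisj : Disjoint (T.eigenspace μ) (⨆ (c : K) (_ : c ≠ μ), T.eigenspace c) :=
    iSupIndep_def.mp T.eigenspaces_iSupIndep μ
  have hy0 : y = 0 := by
    have := hdisj.le_bot (Submodule.mem_inf.mpr ⟨hyeig, hyB⟩)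
    simpa using this
  have hzS : z ∈ S (a₀, b₀) := by
    rw [← hxy, hy0, add_zero]; exact hxS
  exact aux_act f g a₀ b₀ z hzS
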